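/- The toric ring K[A(B_1,...,B_d)] of a nested configuration has a combinatorial pure subring isomorphic to K[A]. Consequently, if K[A(B_1,...,B_d)] is normal (resp. very ample), then K[A] is normal (resp. very ample). -/

import Mathlib

open scoped BigOperators

section Semigroup
variable {σ : Type*} [Fintype σ]

/-- Cast an exponent vector to an integer vector. -/
def vecZ (v : σ → ℕ) : σ → ℤ := fun i => (v i : ℤ)

/-- Cast an integer vector to a rational vector. -/
def vecQ (v : σ → ℤ) : σ → ℚ := fun i => (v i : ℚ)

/-- The affine semigroup `ℤ_{≥0}{a_1,…,a_n}` generated by a set of exponent vectors. -/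
def nnSpan (S : Set (σ → ℕ)) : AddSubmonoid (σ → ℤ) := AddSubmonoid.closure (vecZ '' S)

/-- The group `ℤ{a_1,…,a_n}` generated by a set of exponent vectors. -/
def zSpan (S : Set (σ → ℕ)) : AddSubgroup (σ → ℤ) := AddSubgroup.closure (vecZ '' S)

/-- The rational cone `ℚ_{≥0}{a_1,…,a_n}` (integer points thereof). -/
def qCone (S : Set (σ → ℕ)) : Set (σ → ℤ) :=
  {v | ∃ (n : ℕ) (f : Fin n → (σ → ℕ)) (c : Fin n → ℚ),
    (∀ k, f k ∈ S) ∧ (∀ k, 0 ≤ c k) ∧ vecQ v = ∑ k, c k • vecQ (vecZ (f k))}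

/-- Normality of the affine semigroup generated by `S`:
`ℤ_{≥0} S = ℤ S ∩ ℚ_{≥0} S`. -/
def IsNormalCfg (S : Set (σ → ℕ)) : Prop :=
  ∀ v : σ → ℤ, v ∈ zSpan S → v ∈ qCone S → v ∈ nnSpan S

/-- Very ampleness: `(ℤ S ∩ ℚ_{≥0} S) \ ℤ_{≥0} S` is a finite set. -/
def IsVeryAmpleCfg (S : Set (σ → ℕ)) : Prop :=
  (((zSpan S : Set (σ → ℤ)) ∩ qCone S) \ (nnSpan S : Set (σ → ℤ))).Finite

/-- A configuration: a finite set of exponent vectors lying on a common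
affine hyperplane `w · x = 1`. -/
def IsConfiguration (S : Set (σ → ℕ)) : Prop :=
  S.Finite ∧ ∃ w : σ → ℚ, ∀ v ∈ S, ∑ i, w i * (v i : ℚ) = 1

end Semigroup

section Nested
variable {d : ℕ} {μ : Fin d → ℕ}

/-- Embed a vector of exponents of the block of variables `u^{(i)}`
into the exponent space of all variables `u^{(1)},…,u^{(d)}`. -/
def blockEmb (μ : Fin d → ℕ) (i : Fin d) (v : Fin (μ i) → ℕ) :
    ((Σ j : Fin d, Fin (μ j)) → ℕ) :=
  fun p => if h : p.1 = i then v (h ▸ p.2) else 0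

/-- The nested configuration `A(B_1,…,B_d)`: exponent vectors of the monomials
`m_{j_1}^{(i_1)} ⋯ m_{j_r}^{(i_r)}` where `t_{i_1} ⋯ t_{i_r} ∈ A`. -/
def Nested (A : Set (Fin d → ℕ)) (B : ∀ i : Fin d, Set (Fin (μ i) → ℕ)) :
    Set ((Σ j : Fin d, Fin (μ j)) → ℕ) :=
  {v | ∃ a ∈ A, ∃ c : ∀ i : Fin d, Multiset (Fin (μ i) → ℕ),
    (∀ i, Multiset.card (c i) = a i) ∧ (∀ i, ∀ b ∈ c i, b ∈ B i) ∧
    v = ∑ i : Fin d, blockEmb μ i (c i).sum}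

end Nested

/-- `S` is (the exponent-vector set of) a combinatorial pure subring of `T`:
`S` consists of the elements of `T` lying on a face (cut out by a supporting
hyperplane) of the convex hull of `T`. -/
def IsCPS {σ : Type*} [Fintype σ] (S T : Set (σ → ℕ)) : Prop :=
  S ⊆ T ∧ ∃ (w : σ → ℚ) (b : ℚ), (∀ v ∈ T, ∑ i, w i * (v i : ℚ) ≤ b) ∧
    S = {v ∈ T | ∑ i, w i * (v i : ℚ) = b}


section AuxExtra
lemma multiset_sum_nonpos (s : Multiset ℚ) (h : ∀ x ∈ s, x ≤ 0) : s.sum ≤ 0 := by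
  induction s using Multiset.induction with
  | empty => simp
  | cons a t ih =>
    simp only [Multiset.sum_cons]
    have ha : a ≤ 0 := h a (Multiset.mem_cons_self a t)
    have ht : t.sum ≤ 0 := ih fun x hx => h x (Multiset.mem_cons_of_mem hx)
    linarith

lemma multiset_sum_nonpos_zero (s : Multiset ℚ) (h : ∀ x ∈ s, x ≤ 0) (hs : s.sum = 0) :
    ∀ x ∈ s, x = 0 := by
  induction s using Multiset.induction with
  | empty => simp
  | cons a t ih =>
    simp only [Multiset.sum_cons] at hs
    have ha : a ≤ 0 := h a (Multiset.mem_cons_self a t)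
    have ht : t.sum ≤ 0 := multiset_sum_nonpos t fun x hx => h x (Multiset.mem_cons_of_mem hx)
    have ha0 : a = 0 := le_antisymm ha (by linarith)
    have hts : t.sum = 0 := by linarith
    intro x hx
    rcases Multiset.mem_cons.mp hx with h1 | h2
    · exact h1.trans ha0
    · exact ih (fun x hx => h x (Multiset.mem_cons_of_mem hx)) hts x h2

lemma baseN_inj : ∀ {n : ℕ} {N : ℕ} (v w : Fin n → ℕ), (∀ j, v j < N) → (∀ j, w j < N) →
    (∑ j, v j * N ^ (j : ℕ)) = (∑ j, w j * N ^ (j : ℕ)) → v = w := by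
  intro n
  induction n with
  | zero => intro N v w _ _ _; funext j; exact j.elim0
  | succ n ih =>
    intro N v w hv hw h
    rw [Fin.sum_univ_succ, Fin.sum_univ_succ] at h
    have hrw : ∀ (u : Fin (n + 1) → ℕ),
        ∑ j : Fin n, u j.succ * N ^ ((j.succ : Fin (n+1)) : ℕ)
          = (∑ j : Fin n, u j.succ * N ^ (j : ℕ)) * N := by
      intro u
      rw [Finset.sum_mul]
      refine Finset.sum_congr rfl fun j _ => ?_
      simp [Fin.val_succ, pow_succ]; ring
    rw [hrw v, hrw w] at h
    simp only [Fin.val_zero, pow_zero, mul_one] at h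
    have hN : 0 < N := lt_of_le_of_lt (Nat.zero_le _) (hv 0)
    have h0 : v 0 = w 0 := by
      have hm := congrArg (· % N) h
      simpa [Nat.add_mul_mod_self_right, Nat.mod_eq_of_lt (hv 0), Nat.mod_eq_of_lt (hw 0)] using hm
    have htail : (∑ j : Fin n, v j.succ * N ^ (j : ℕ)) = ∑ j : Fin n, w j.succ * N ^ (j : ℕ) := by
      rw [h0] at h
      have := Nat.add_left_cancel h
      exact Nat.eq_of_mul_eq_mul_right hN this
    have := ih (fun j => v j.succ) (fun j => w j.succ) (fun j => hv j.succ) (fun j => hw j.succ) htail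
    funext j
    refine Fin.cases ?_ ?_ j
    · exact h0
    · intro k; exact congrFun this k


end AuxExtra

section AuxGen
variable {σ : Type*} [Fintype σ]

def valHom (w : σ → ℚ) : (σ → ℕ) →+ ℚ where
  toFun x := ∑ i, w i * (x i : ℚ)
  map_zero' := by simp
  map_add' x y := by
    simp [Pi.add_apply, Nat.cast_add, mul_add, Finset.sum_add_distrib]

def valHomZ (w : σ → ℚ) : (σ → ℤ) →+ ℚ where
  toFun x := ∑ i, w i * (x i : ℚ)
  map_zero' := by simp
  map_add' x y := by
    simp [Pi.add_apply, Int.cast_add, mul_add, Finset.sum_add_distrib]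

lemma valHomZ_vecZ (w : σ → ℚ) (x : σ → ℕ) : valHomZ w (vecZ x) = valHom w x := by
  simp [valHomZ, valHom, vecZ]

lemma mem_nnSpan_face {T : Set (σ → ℕ)} {W : σ → ℚ} (hT : ∀ g ∈ T, valHom W g ≤ 0)
    {x : σ → ℤ} (hx : x ∈ nnSpan T) (hx0 : valHomZ W x = 0) :
    x ∈ nnSpan {v | v ∈ T ∧ valHom W v = 0} := by
  have hx' : x ∈ AddSubmonoid.closure (vecZ '' T) := hx
  refine (show valHomZ W x ≤ 0 ∧
      (valHomZ W x = 0 → x ∈ nnSpan {v | v ∈ T ∧ valHom W v = 0}) from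
    AddSubmonoid.closure_induction
    (motive := fun y _ => valHomZ W y ≤ 0 ∧
      (valHomZ W y = 0 → y ∈ nnSpan {v | v ∈ T ∧ valHom W v = 0}))
    ?_ ?_ ?_ hx').2 hx0
  · rintro z ⟨g, hg, rfl⟩
    constructor
    · rw [valHomZ_vecZ]; exact hT g hg
    · intro h0
      apply AddSubmonoid.subset_closure
      exact ⟨g, ⟨hg, by rwa [valHomZ_vecZ] at h0⟩, rfl⟩
  · exact ⟨by simp, fun _ => (nnSpan _).zero_mem⟩
  · rintro y z _ _ ⟨hy1, hy2⟩ ⟨hz1, hz2⟩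
    refine ⟨?_, ?_⟩
    · rw [map_add]; linarith
    · intro h0
      rw [map_add] at h0
      have hy0 : valHomZ W y = 0 := by linarith
      have hz0 : valHomZ W z = 0 := by linarith
      exact (nnSpan _).add_mem (hy2 hy0) (hz2 hz0)

lemma zspan_valHomZ_zero {T : Set (σ → ℕ)} {f : (σ → ℤ) →+ ℚ}
    (hf : ∀ g ∈ T, f (vecZ g) = 0) {x} (hx : x ∈ zSpan T) : f x = 0 := by
  have hle : zSpan T ≤ f.ker := by
    rw [zSpan, AddSubgroup.closure_le]
    rintro z ⟨g, hg, rfl⟩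
    exact AddMonoidHom.mem_ker.mpr (hf g hg)
  exact AddMonoidHom.mem_ker.mp (hle hx)

def fNaux {n : ℕ} (N : ℕ) (x : Fin n → ℕ) : ℕ := ∑ j : Fin n, x j * N ^ (j : ℕ)

lemma fNaux_cast {n : ℕ} (N : ℕ) (x : Fin n → ℕ) :
    (fNaux N x : ℚ) = ∑ j : Fin n, (N : ℚ) ^ (j : ℕ) * (x j : ℚ) := by
  unfold fNaux
  push_cast
  exact Finset.sum_congr rfl fun j _ => mul_comm _ _
end AuxGen

section AuxNested
variable {d : ℕ} {μ : Fin d → ℕ}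

def embN (b : ∀ i : Fin d, Fin (μ i) → ℕ) (a : Fin d → ℕ) : (Σ j : Fin d, Fin (μ j)) → ℕ :=
  fun p => a p.1 * b p.1 p.2

def Lz (b : ∀ i : Fin d, Fin (μ i) → ℕ) : (Fin d → ℤ) →+ ((Σ j : Fin d, Fin (μ j)) → ℤ) where
  toFun x := fun p => x p.1 * (b p.1 p.2 : ℤ)
  map_zero' := by funext p; simp
  map_add' x y := by funext p; simp [add_mul]

def Lq (b : ∀ i : Fin d, Fin (μ i) → ℕ) : (Fin d → ℚ) →ₗ[ℚ] ((Σ j : Fin d, Fin (μ j)) → ℚ) where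
  toFun x := fun p => x p.1 * (b p.1 p.2 : ℚ)
  map_add' x y := by funext p; simp [add_mul]
  map_smul' c x := by funext p; simp [smul_eq_mul]; ring

lemma vecZ_embN (b : ∀ i : Fin d, Fin (μ i) → ℕ) (a : Fin d → ℕ) :
    vecZ (embN b a) = Lz b (vecZ a) := by
  funext p; simp [vecZ, embN, Lz]

lemma vecQ_Lz (b : ∀ i : Fin d, Fin (μ i) → ℕ) (x : Fin d → ℤ) :
    vecQ (Lz b x) = Lq b (vecQ x) := by
  funext p; simp [vecQ, Lz, Lq]

lemma Lq_vecQ_vecZ (b : ∀ i : Fin d, Fin (μ i) → ℕ) (a : Fin d → ℕ) :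
    Lq b (vecQ (vecZ a)) = vecQ (vecZ (embN b a)) := by
  funext p; simp [vecQ, vecZ, Lq, embN]

lemma sum_blockEmb_apply (f : ∀ i : Fin d, Fin (μ i) → ℕ) (i0 : Fin d) (j : Fin (μ i0)) :
    (∑ i, blockEmb μ i (f i)) ⟨i0, j⟩ = f i0 j := by
  rw [Finset.sum_apply]
  rw [Finset.sum_eq_single i0]
  · exact dif_pos rfl
  · intro i _ hne
    exact dif_neg fun h => hne h.symm
  · intro h; exact absurd (Finset.mem_univ i0) h

lemma embN_mem {A : Set (Fin d → ℕ)} {B : ∀ i : Fin d, Set (Fin (μ i) → ℕ)}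
    {b : ∀ i, Fin (μ i) → ℕ} (hb : ∀ i, b i ∈ B i) {a : Fin d → ℕ} (ha : a ∈ A) :
    embN b a ∈ Nested A B := by
  refine ⟨a, ha, fun i => Multiset.replicate (a i) (b i),
    fun i => Multiset.card_replicate _ _, ?_, ?_⟩
  · intro i x hx
    rw [Multiset.eq_of_mem_replicate hx]; exact hb i
  · funext p
    obtain ⟨i, j⟩ := p
    rw [sum_blockEmb_apply, Multiset.sum_replicate]
    simp [embN]

lemma valHom_sum_blockEmb (W : (Σ j : Fin d, Fin (μ j)) → ℚ) (f : ∀ i, Fin (μ i) → ℕ) :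
    valHom W (∑ i, blockEmb μ i (f i)) = ∑ i, valHom (fun j => W ⟨i, j⟩) (f i) := by
  unfold valHom
  simp only [AddMonoidHom.coe_mk, ZeroHom.coe_mk]
  rw [← Finset.univ_sigma_univ, Finset.sum_sigma]
  exact Finset.sum_congr rfl fun i _ => Finset.sum_congr rfl fun j _ => by
    rw [sum_blockEmb_apply]

lemma embN_eq_sum (b : ∀ i : Fin d, Fin (μ i) → ℕ) (a : Fin d → ℕ) :
    embN b a = ∑ i, blockEmb μ i ((a i) • (b i)) := by
  funext p; obtain ⟨i, j⟩ := p
  rw [sum_blockEmb_apply]; simp [embN]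

lemma Lz_inj {b : ∀ i : Fin d, Fin (μ i) → ℕ} (hb : ∀ i, ∃ j, b i j ≠ 0) :
    Function.Injective (Lz b) := by
  intro x y h
  funext i
  obtain ⟨j, hj⟩ := hb i
  have h2 : x i * (b i j : ℤ) = y i * (b i j : ℤ) := congrFun h ⟨i, j⟩
  have hbz : (b i j : ℤ) ≠ 0 := Int.natCast_ne_zero.mpr hj
  exact mul_right_cancel₀ hbz h2

lemma Lz_mem_zSpan {A : Set (Fin d → ℕ)} {B : ∀ i : Fin d, Set (Fin (μ i) → ℕ)}
    {b : ∀ i, Fin (μ i) → ℕ} (hb : ∀ i, b i ∈ B i) {v : Fin d → ℤ} (hv : v ∈ zSpan A) :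
    Lz b v ∈ zSpan (Nested A B) := by
  have hle : zSpan A ≤ AddSubgroup.comap (Lz b) (zSpan (Nested A B)) := by
    rw [zSpan, AddSubgroup.closure_le]
    rintro z ⟨a, ha, rfl⟩
    show Lz b (vecZ a) ∈ zSpan (Nested A B)
    rw [← vecZ_embN]
    exact AddSubgroup.subset_closure ⟨embN b a, embN_mem hb ha, rfl⟩
  exact hle hv

lemma Lz_mem_qCone {A : Set (Fin d → ℕ)} {B : ∀ i : Fin d, Set (Fin (μ i) → ℕ)}
    {b : ∀ i, Fin (μ i) → ℕ} (hb : ∀ i, b i ∈ B i) {v : Fin d → ℤ} (hv : v ∈ qCone A) :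
    Lz b v ∈ qCone (Nested A B) := by
  obtain ⟨n, f, c, hf, hc, hrep⟩ := hv
  refine ⟨n, fun k => embN b (f k), c, fun k => embN_mem hb (hf k), hc, ?_⟩
  rw [vecQ_Lz, hrep, map_sum]
  exact Finset.sum_congr rfl fun k _ => by rw [map_smul, Lq_vecQ_vecZ]

lemma nnSpan_embN {A : Set (Fin d → ℕ)} (b : ∀ i : Fin d, Fin (μ i) → ℕ) :
    nnSpan (embN b '' A) = AddSubmonoid.map (Lz b) (nnSpan A) := by
  rw [nnSpan, nnSpan, AddMonoidHom.map_mclosure]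
  congr 1
  rw [Set.image_image, Set.image_image]
  exact Set.image_congr fun a _ => vecZ_embN b a

end AuxNested


section MoreAux
lemma valHom_sub {n : ℕ} (Nq Fq : ℚ) (ωi : Fin n → ℚ) (x : Fin n → ℕ)
    (hx : ∑ j, ωi j * (x j : ℚ) = 1) :
    valHom (fun j : Fin n => Nq ^ (j : ℕ) - Fq * ωi j) x
      = (∑ j : Fin n, Nq ^ (j : ℕ) * (x j : ℚ)) - Fq := by
  unfold valHom
  simp only [AddMonoidHom.coe_mk, ZeroHom.coe_mk]
  calc ∑ j : Fin n, (Nq ^ (j : ℕ) - Fq * ωi j) * (x j : ℚ)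
      = ∑ j : Fin n, (Nq ^ (j : ℕ) * (x j : ℚ) - Fq * (ωi j * (x j : ℚ))) :=
        Finset.sum_congr rfl fun j _ => by ring
    _ = (∑ j : Fin n, Nq ^ (j : ℕ) * (x j : ℚ)) - Fq * ∑ j : Fin n, ωi j * (x j : ℚ) := by
        rw [Finset.sum_sub_distrib, Finset.mul_sum]
    _ = _ := by rw [hx, mul_one]
end MoreAux

/-- the toric ring of a nested configuration `A(B_1,…,B_d)` has a combinatorial
pure subring isomorphic to `K[A]` (an isomorphism of the underlying affine semigroups);
consequently, if `K[A(B_1,…,B_d)]` is normal (resp. very ample) then so is `K[A]`. -/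
theorem nested_has_cps_isomorphic_to_A {d r : ℕ} {μ : Fin d → ℕ}
    (A : Set (Fin d → ℕ)) (B : ∀ i : Fin d, Set (Fin (μ i) → ℕ))
    (hA : IsConfiguration A)
    (hdeg : ∀ v ∈ A, ∑ i, v i = r)
    (hcov : ∀ i : Fin d, ∃ v ∈ A, v i ≠ 0)
    (hB : ∀ i, IsConfiguration (B i))
    (hBne : ∀ i, (B i).Nonempty) :
    (∃ S : Set ((Σ j : Fin d, Fin (μ j)) → ℕ),
        IsCPS S (Nested A B) ∧ Nonempty (↥(nnSpan S) ≃+ ↥(nnSpan A))) ∧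
    (IsNormalCfg (Nested A B) → IsNormalCfg A) ∧
    (IsVeryAmpleCfg (Nested A B) → IsVeryAmpleCfg A) := by
  classical
  choose ω hω using fun i => (hB i).2
  have hNex : ∀ i : Fin d, ∃ Nn : ℕ, ∀ x ∈ B i, ∀ j, x j < Nn := by
    intro i
    refine ⟨((hB i).1.toFinset.sup fun x => Finset.univ.sup x) + 1, fun x hx j => ?_⟩
    have h1 : x j ≤ Finset.univ.sup x := Finset.le_sup (Finset.mem_univ j)
    have h2 : Finset.univ.sup x ≤ (hB i).1.toFinset.sup (fun x => Finset.univ.sup x) :=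
      Finset.le_sup ((Set.Finite.mem_toFinset _).mpr hx)
    omega
  choose N hN using hNex
  have hbex : ∀ i : Fin d, ∃ x, x ∈ B i ∧ ∀ y ∈ B i, fNaux (N i) y ≤ fNaux (N i) x := by
    intro i
    obtain ⟨x, hx1, hx2⟩ := Finset.exists_max_image (hB i).1.toFinset (fNaux (N i))
      ((Set.Finite.toFinset_nonempty _).mpr (hBne i))
    exact ⟨x, (Set.Finite.mem_toFinset _).mp hx1,
      fun y hy => hx2 y ((Set.Finite.mem_toFinset _).mpr hy)⟩
  choose b hbB hbmax using hbex
  have hbne : ∀ i, ∃ j, b i j ≠ 0 := by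
    intro i
    by_contra h
    push_neg at h
    have h1 := hω i (b i) (hbB i)
    simp [h] at h1
  set W : (Σ j : Fin d, Fin (μ j)) → ℚ :=
    fun p => (N p.1 : ℚ) ^ (p.2 : ℕ) - (fNaux (N p.1) (b p.1) : ℚ) * ω p.1 p.2 with hWdef
  have hWval : ∀ i, ∀ x ∈ B i,
      valHom (fun j => W ⟨i, j⟩) x = (fNaux (N i) x : ℚ) - (fNaux (N i) (b i) : ℚ) := by
    intro i x hx
    rw [show (fun j => W ⟨i, j⟩)
        = fun j : Fin (μ i) => ((N i : ℚ)) ^ (j : ℕ) - ((fNaux (N i) (b i) : ℚ)) * ω i j from rfl]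
    rw [valHom_sub _ _ _ _ (hω i x hx), fNaux_cast, fNaux_cast]
  have hWle : ∀ i, ∀ x ∈ B i, valHom (fun j => W ⟨i, j⟩) x ≤ 0 := by
    intro i x hx
    rw [hWval i x hx, sub_nonpos]
    exact_mod_cast hbmax i x hx
  have hWeq : ∀ i, ∀ x ∈ B i, valHom (fun j => W ⟨i, j⟩) x = 0 → x = b i := by
    intro i x hx h0
    rw [hWval i x hx] at h0
    have h1 : fNaux (N i) x = fNaux (N i) (b i) := by exact_mod_cast sub_eq_zero.mp h0
    exact baseN_inj x (b i) (hN i x hx) (hN i (b i) (hbB i)) h1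
  have hW0 : ∀ i, valHom (fun j => W ⟨i, j⟩) (b i) = 0 := by
    intro i; rw [hWval i (b i) (hbB i)]; ring
  -- value on Nested
  have hle : ∀ v ∈ Nested A B, valHom W v ≤ 0 := by
    rintro v ⟨a, ha, c, hcard, hmem, rfl⟩
    rw [valHom_sum_blockEmb]
    refine Finset.sum_nonpos fun i _ => ?_
    rw [AddMonoidHom.map_multiset_sum]
    refine multiset_sum_nonpos _ fun q hq => ?_
    obtain ⟨x, hx, rfl⟩ := Multiset.mem_map.mp hq
    exact hWle i x (hmem i x hx)
  have hembval : ∀ a ∈ A, valHom W (embN b a) = 0 := by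
    intro a ha
    rw [embN_eq_sum, valHom_sum_blockEmb]
    refine Finset.sum_eq_zero fun i _ => ?_
    rw [AddMonoidHom.map_nsmul, hW0 i, smul_zero]
  have hface : ∀ v ∈ Nested A B, valHom W v = 0 → v ∈ embN b '' A := by
    rintro v ⟨a, ha, c, hcard, hmem, rfl⟩ h0
    rw [valHom_sum_blockEmb] at h0
    have hterm : ∀ i ∈ Finset.univ, valHom (fun j => W ⟨i, j⟩) ((c i).sum) ≤ 0 := by
      intro i _
      rw [AddMonoidHom.map_multiset_sum]
      refine multiset_sum_nonpos _ fun q hq => ?_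
      obtain ⟨x, hx, rfl⟩ := Multiset.mem_map.mp hq
      exact hWle i x (hmem i x hx)
    have hall := (Finset.sum_eq_zero_iff_of_nonpos hterm).mp h0
    have hrep : ∀ i, c i = Multiset.replicate (a i) (b i) := by
      intro i
      rw [Multiset.eq_replicate]
      refine ⟨hcard i, fun x hx => ?_⟩
      have h1 := hall i (Finset.mem_univ i)
      rw [AddMonoidHom.map_multiset_sum] at h1
      have h2 := multiset_sum_nonpos_zero _
        (by rintro q hq
            obtain ⟨y, hy, rfl⟩ := Multiset.mem_map.mp hq
            exact hWle i y (hmem i y hy)) h1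
      exact hWeq i x (hmem i x hx) (h2 _ (Multiset.mem_map_of_mem _ hx))
    refine ⟨a, ha, ?_⟩
    funext p; obtain ⟨i, j⟩ := p
    rw [sum_blockEmb_apply, hrep i, Multiset.sum_replicate]
    simp [embN]
  have hSface : embN b '' A = {v | v ∈ Nested A B ∧ valHom W v = 0} := by
    ext v
    constructor
    · rintro ⟨a, ha, rfl⟩
      exact ⟨embN_mem hbB ha, hembval a ha⟩
    · rintro ⟨h1, h2⟩
      exact hface v h1 h2
  have hLinj : Function.Injective (Lz b) := Lz_inj hbne
  have hpull : ∀ v : Fin d → ℤ, v ∈ zSpan A → Lz b v ∈ nnSpan (Nested A B) → v ∈ nnSpan A := by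
    intro v hz hmem
    have hW0' : valHomZ W (Lz b v) = 0 := by
      have hgen : ∀ g ∈ A, ((valHomZ W).comp (Lz b)) (vecZ g) = 0 := by
        intro g hg
        show valHomZ W (Lz b (vecZ g)) = 0
        rw [← vecZ_embN, valHomZ_vecZ]
        exact hembval g hg
      exact zspan_valHomZ_zero hgen hz
    have hf := mem_nnSpan_face hle hmem hW0'
    rw [← hSface, nnSpan_embN] at hf
    obtain ⟨u, hu, huv⟩ := AddSubmonoid.mem_map.mp hf
    rwa [← hLinj huv]
  refine ⟨⟨embN b '' A, ⟨?_, W, 0, ?_, ?_⟩, ?_⟩, ?_, ?_⟩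
  · rintro v ⟨a, ha, rfl⟩
    exact embN_mem hbB ha
  · exact fun v hv => hle v hv
  · exact hSface
  · rw [nnSpan_embN]
    exact ⟨(AddSubmonoid.equivMapOfInjective (nnSpan A) (Lz b) hLinj).symm⟩
  · intro hNrm v hz hq
    exact hpull v hz (hNrm _ (Lz_mem_zSpan hbB hz) (Lz_mem_qCone hbB hq))
  · intro hVA
    have hsub : (((zSpan A : Set (Fin d → ℤ)) ∩ qCone A) \ (nnSpan A : Set (Fin d → ℤ)))
        ⊆ (Lz b) ⁻¹' ((((zSpan (Nested A B) : Set _) ∩ qCone (Nested A B))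
          \ (nnSpan (Nested A B) : Set _))) := by
      rintro v ⟨⟨h1, h2⟩, h3⟩
      refine ⟨⟨Lz_mem_zSpan hbB h1, Lz_mem_qCone hbB h2⟩, fun hmem => h3 (hpull v h1 hmem)⟩
    exact Set.Finite.subset (Set.Finite.preimage (Set.injOn_of_injective hLinj) hVA) hsub
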